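/- Any valid partition with grooming factor C must use at least ⌈(N² + α)/(8C)⌉ subgraphs, where α = −1 if N is odd, α = 4 if N ≡ 2 (mod 4), and α = 8 if N ≡ 0 (mod 4). -/

import Mathlib

/-- The load induced on the arc of the directed cycle `C⃗_p` going from `t` to `t+1`
by a set `S` of requests, each request `(i,j)` being routed clockwise from `i` to `j`. -/
def cload (p : ℕ) (S : Finset (ZMod p × ZMod p)) (t : ZMod p) : ℕ :=
  (S.filter fun a => (t - a.1).val < (a.2 - a.1).val).card

open Finset

lemma zmod_cast_val (p : ℕ) [NeZero p] (a : ZMod p) : ((a.val : ℕ) : ZMod p) = a := by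
  rw [ZMod.natCast_val, ZMod.cast_id]

lemma card_val_lt (p : ℕ) [NeZero p] (q : ℕ) (hq : q ≤ p) :
    (univ.filter fun s : ZMod p => s.val < q).card = q := by
  have : (univ.filter fun s : ZMod p => s.val < q).card = (range q).card := by
    refine Finset.card_bij' (fun s _ => s.val) (fun k _ => (k : ZMod p)) ?_ ?_ ?_ ?_
    · intro s hs; simp at hs ⊢; exact hs
    · intro k hk; simp only [Finset.mem_range] at hk
      simp only [Finset.mem_filter, Finset.mem_univ, true_and]
      rwa [ZMod.val_natCast_of_lt (lt_of_lt_of_le hk hq)]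
    · intro s hs; exact zmod_cast_val p s
    · intro k hk; simp at hk; exact ZMod.val_natCast_of_lt (lt_of_lt_of_le hk hq)
  rw [this, card_range]

lemma sum_cload (p : ℕ) [NeZero p] (S : Finset (ZMod p × ZMod p)) :
    ∑ t : ZMod p, cload p S t = ∑ a ∈ S, (a.2 - a.1).val := by
  unfold cload
  simp_rw [Finset.card_filter]
  rw [Finset.sum_comm]
  refine Finset.sum_congr rfl fun a _ => ?_
  rw [← Finset.card_filter]
  have h1 : (univ.filter fun t : ZMod p => (t - a.1).val < (a.2 - a.1).val).card
      = (univ.filter fun s : ZMod p => s.val < (a.2 - a.1).val).card := by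
    refine Finset.card_bij' (fun t _ => t - a.1) (fun s _ => s + a.1) ?_ ?_ ?_ ?_ <;>
      intro x hx <;>
      simp only [Finset.mem_filter, Finset.mem_univ, true_and, add_sub_cancel_right,
        sub_add_cancel] at hx ⊢ <;> exact hx
  rw [h1, card_val_lt p _ (le_of_lt (ZMod.val_lt _))]

section
variable (N : ℕ) [NeZero N]

lemma val_succ (hN : 2 ≤ N) (z : ZMod N) : (z + 1).val = (z.val + 1) % N := by
  haveI : Fact (1 < N) := ⟨hN⟩
  rw [ZMod.val_add, ZMod.val_one]

lemma val_neg_one' (hN : 2 ≤ N) : (-1 : ZMod N).val = N - 1 := by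
  haveI : Fact (1 < N) := ⟨hN⟩
  rw [ZMod.neg_val, if_neg (one_ne_zero), ZMod.val_one]

lemma cov_start (hN : 2 ≤ N) (a : ZMod N × ZMod N) (ha1 : a.1 ≠ a.2)
    (ha2 : 2 * (a.2 - a.1).val ≤ N) (t : ZMod N) :
    (((t + 1) - a.1).val < (a.2 - a.1).val ∧ ¬((t - a.1).val < (a.2 - a.1).val)) ↔
      a.1 = t + 1 := by
  haveI : Fact (1 < N) := ⟨hN⟩
  set q := (a.2 - a.1).val with hq
  have hq1 : 1 ≤ q := by
    rcases Nat.eq_zero_or_pos q with h | h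
    · exact absurd ((ZMod.val_eq_zero _).mp h) (sub_ne_zero.mpr (Ne.symm ha1))
    · exact h
  set x := (t - a.1).val with hx
  have hxN : x < N := ZMod.val_lt _
  have hstep : ((t + 1) - a.1) = (t - a.1) + 1 := by ring
  have hv : ((t + 1) - a.1).val = (x + 1) % N := by rw [hstep, val_succ N hN]
  constructor
  · rintro ⟨h1, h2⟩
    rw [hv] at h1
    push_neg at h2
    have hxe : x = N - 1 := by
      rcases Nat.lt_or_ge (x + 1) N with h | h
      · rw [Nat.mod_eq_of_lt h] at h1; omega
      · omega
    have : t - a.1 = -1 := by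
      have := zmod_cast_val N (t - a.1)
      rw [← hx, hxe] at this
      rw [← this, ← val_neg_one' N hN, zmod_cast_val]
    have : a.1 = t - (-1) := by rw [← this]; ring
    rw [this]; ring
  · intro h
    have h1 : t - a.1 = -1 := by rw [h]; ring
    have hxe : x = N - 1 := by rw [hx, h1, val_neg_one' N hN]
    constructor
    · rw [hv, hxe]
      have : (N - 1 + 1) % N = 0 := by
        rw [Nat.sub_add_cancel (by omega)]; exact Nat.mod_self N
      rw [this]; omega
    · omega

lemma cov_end (hN : 2 ≤ N) (a : ZMod N × ZMod N) (ha1 : a.1 ≠ a.2)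
    (ha2 : 2 * (a.2 - a.1).val ≤ N) (t : ZMod N) :
    ((t - a.1).val < (a.2 - a.1).val ∧ ¬(((t + 1) - a.1).val < (a.2 - a.1).val)) ↔
      a.2 = t + 1 := by
  haveI : Fact (1 < N) := ⟨hN⟩
  set q := (a.2 - a.1).val with hq
  have hq1 : 1 ≤ q := by
    rcases Nat.eq_zero_or_pos q with h | h
    · exact absurd ((ZMod.val_eq_zero _).mp h) (sub_ne_zero.mpr (Ne.symm ha1))
    · exact h
  set x := (t - a.1).val with hx
  have hxN : x < N := ZMod.val_lt _
  have hstep : ((t + 1) - a.1) = (t - a.1) + 1 := by ring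
  have hv : ((t + 1) - a.1).val = (x + 1) % N := by rw [hstep, val_succ N hN]
  constructor
  · rintro ⟨h1, h2⟩
    rw [hv] at h2
    push_neg at h2
    have hxq : x + 1 = q := by
      rcases Nat.lt_or_ge (x + 1) N with h | h
      · rw [Nat.mod_eq_of_lt h] at h2; omega
      · have : x + 1 = N := by omega
        rw [this, Nat.mod_self] at h2; omega
    have e1 : a.2 - a.1 = (q : ZMod N) := (zmod_cast_val N _).symm
    have e2 : t - a.1 = ((x : ℕ) : ZMod N) := (zmod_cast_val N _).symm
    have : a.2 - a.1 = (t - a.1) + 1 := by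
      rw [e1, e2, ← hxq]; push_cast; ring
    linear_combination this
  · intro h
    have he : (t - a.1) + 1 = a.2 - a.1 := by rw [h]; ring
    have hvq : (x + 1) % N = q := by
      rw [hx, ← val_succ N hN (t - a.1), he]
    constructor
    · rcases Nat.lt_or_ge (x + 1) N with hlt | hge
      · rw [Nat.mod_eq_of_lt hlt] at hvq; omega
      · have : x + 1 = N := by omega
        rw [this, Nat.mod_self] at hvq; omega
    · rw [hv, hvq]; omega

lemma cload_step (hN : 2 ≤ N) (T : Finset (ZMod N × ZMod N))
    (hT1 : ∀ a ∈ T, a.1 ≠ a.2 ∧ 2 * (a.2 - a.1).val ≤ N) (t : ZMod N) :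
    cload N T (t + 1) + (T.filter fun a => a.2 = t + 1).card
      = cload N T t + (T.filter fun a => a.1 = t + 1).card := by
  classical
  unfold cload
  have e1 : ((T.filter fun a => ((t+1) - a.1).val < (a.2 - a.1).val).filter
      fun a => ¬((t - a.1).val < (a.2 - a.1).val)) = T.filter fun a => a.1 = t + 1 := by
    rw [Finset.filter_filter]
    apply Finset.filter_congr
    intro a ha
    have h := hT1 a ha
    simpa using cov_start N hN a h.1 h.2 t
  have e2 : ((T.filter fun a => (t - a.1).val < (a.2 - a.1).val).filter
      fun a => ¬(((t+1) - a.1).val < (a.2 - a.1).val)) = T.filter fun a => a.2 = t + 1 := by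
    rw [Finset.filter_filter]
    apply Finset.filter_congr
    intro a ha
    have h := hT1 a ha
    simpa using cov_end N hN a h.1 h.2 t
  have k1 := Finset.card_filter_add_card_filter_not
    (s := T.filter fun a => ((t+1) - a.1).val < (a.2 - a.1).val)
    (fun a => (t - a.1).val < (a.2 - a.1).val)
  have k2 := Finset.card_filter_add_card_filter_not
    (s := T.filter fun a => (t - a.1).val < (a.2 - a.1).val)
    (fun a => ((t+1) - a.1).val < (a.2 - a.1).val)
  rw [e1] at k1
  rw [e2] at k2
  have ecomm : ((T.filter fun a => ((t+1) - a.1).val < (a.2 - a.1).val).filter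
      fun a => (t - a.1).val < (a.2 - a.1).val)
      = ((T.filter fun a => (t - a.1).val < (a.2 - a.1).val).filter
        fun a => ((t+1) - a.1).val < (a.2 - a.1).val) := by
    rw [Finset.filter_filter, Finset.filter_filter]
    apply Finset.filter_congr
    intro a _
    simp [and_comm]
  rw [ecomm] at k1
  omega

lemma tourn (T : Finset (ZMod N × ZMod N))
    (hT1 : ∀ a ∈ T, a.1 ≠ a.2 ∧ 2 * (a.2 - a.1).val ≤ N)
    (hT2 : ∀ i j : ZMod N, i ≠ j → 2 * (j - i).val < N → (i, j) ∈ T)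
    (hT3 : ∀ i j : ZMod N, 2 * (j - i).val = N → ((i, j) ∈ T ↔ (j, i) ∉ T))
    (u v : ZMod N) (huv : u ≠ v) : (u, v) ∈ T ↔ (v, u) ∉ T := by
  have hd : (u - v).val = N - (v - u).val := by
    have : u - v = -(v - u) := by ring
    rw [this, ZMod.neg_val]
    simp [sub_ne_zero.mpr (Ne.symm huv)]
  have hne : (v - u).val ≠ 0 := by
    simp [ZMod.val_eq_zero, sub_ne_zero.mpr (Ne.symm huv)]
  have hlt : (v - u).val < N := ZMod.val_lt _
  rcases lt_trichotomy (2 * (v - u).val) N with h | h | h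
  · constructor
    · intro _ hvu
      have := (hT1 (v, u) hvu).2
      simp only at this
      omega
    · intro _; exact hT2 u v huv h
  · exact hT3 u v h
  · constructor
    · intro huvT _
      have := (hT1 (u, v) huvT).2
      simp only at this
      omega
    · intro hvu
      exact absurd (hT2 v u (Ne.symm huv) (by omega)) hvu

lemma degree_sum (T : Finset (ZMod N × ZMod N))
    (hT1 : ∀ a ∈ T, a.1 ≠ a.2 ∧ 2 * (a.2 - a.1).val ≤ N)
    (htourn : ∀ u v : ZMod N, u ≠ v → ((u, v) ∈ T ↔ (v, u) ∉ T))
    (v : ZMod N) :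
    (T.filter fun a => a.1 = v).card + (T.filter fun a => a.2 = v).card = N - 1 := by
  classical
  have hdisj : Disjoint (T.filter fun a => a.1 = v) (T.filter fun a => a.2 = v) := by
    rw [Finset.disjoint_left]
    intro a h1 h2
    simp only [Finset.mem_filter] at h1 h2
    exact (hT1 a h1.1).1 (h1.2.trans h2.2.symm)
  rw [← Finset.card_union_of_disjoint hdisj]
  have : ((T.filter fun a => a.1 = v) ∪ (T.filter fun a => a.2 = v)).card
      = (Finset.univ.erase v).card := by
    apply Finset.card_bij (fun a _ => if a.1 = v then a.2 else a.1)
    · intro a ha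
      simp only [Finset.mem_union, Finset.mem_filter] at ha
      rcases ha with ⟨haT, h⟩ | ⟨haT, h⟩
      · rw [if_pos h]
        refine Finset.mem_erase.mpr ⟨?_, Finset.mem_univ _⟩
        intro hh
        exact (hT1 a haT).1 (h.trans hh.symm)
      · have hne : a.1 ≠ v := fun hh => (hT1 a haT).1 (hh.trans h.symm)
        rw [if_neg hne]
        exact Finset.mem_erase.mpr ⟨hne, Finset.mem_univ _⟩
    · intro a ha b hb hab
      simp only [Finset.mem_union, Finset.mem_filter] at ha hb
      have key : ∀ c : ZMod N × ZMod N,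
          (c ∈ T ∧ c.1 = v ∨ c ∈ T ∧ c.2 = v) →
          (c = (v, if c.1 = v then c.2 else c.1) ∨ c = ((if c.1 = v then c.2 else c.1), v)) ∧ c ∈ T := by
        intro c hc
        rcases hc with ⟨hcT, h⟩ | ⟨hcT, h⟩
        · exact ⟨Or.inl (by rw [if_pos h]; exact Prod.ext h rfl), hcT⟩
        · have hne : c.1 ≠ v := fun hh => (hT1 c hcT).1 (hh.trans h.symm)
          exact ⟨Or.inr (by rw [if_neg hne]; exact Prod.ext rfl h), hcT⟩
      obtain ⟨ha', haT⟩ := key a ha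
      obtain ⟨hb', hbT⟩ := key b hb
      set u := if a.1 = v then a.2 else a.1
      rw [show (if b.1 = v then b.2 else b.1) = u from hab.symm] at hb'
      have huv : u ≠ v := by
        rcases ha' with h | h
        · intro hu
          have := (hT1 a haT).1
          rw [h] at this; simp [hu] at this
        · intro hu
          have := (hT1 a haT).1
          rw [h] at this; simp [hu] at this
      rcases ha' with h1 | h1 <;> rcases hb' with h2 | h2
      · rw [h1, h2]
      · exfalso
        rw [h1] at haT; rw [h2] at hbT
        exact ((htourn v u huv.symm).mp haT) hbT
      · exfalso
        rw [h1] at haT; rw [h2] at hbT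
        exact ((htourn v u huv.symm).mp hbT) haT
      · rw [h1, h2]
    · intro u hu
      have huv : u ≠ v := (Finset.mem_erase.mp hu).1
      by_cases h : (v, u) ∈ T
      · refine ⟨(v, u), ?_, ?_⟩
        · simp [Finset.mem_union, Finset.mem_filter, h]
        · simp
      · have h2 : (u, v) ∈ T := by
          by_contra h3
          exact h ((htourn v u huv.symm).mpr h3)
        refine ⟨(u, v), ?_, ?_⟩
        · simp [Finset.mem_union, Finset.mem_filter, h2]
        · simp [huv]
  rw [this, Finset.card_erase_of_mem (Finset.mem_univ v), Finset.card_univ, ZMod.card]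

lemma sum_val_fun (g : ℕ → ℕ) :
    ∑ d : ZMod N, g d.val = ∑ m ∈ range N, g m := by
  refine Finset.sum_nbij' (fun d => d.val) (fun m => (m : ZMod N)) ?_ ?_ ?_ ?_ ?_
  · intro d _; exact Finset.mem_range.mpr (ZMod.val_lt d)
  · intro m _; exact Finset.mem_univ _
  · intro d _; exact zmod_cast_val N d
  · intro m hm; exact ZMod.val_natCast_of_lt (Finset.mem_range.mp hm)
  · intro d _; rfl

lemma sum_lengths_main (T : Finset (ZMod N × ZMod N))
    (hT1 : ∀ a ∈ T, a.1 ≠ a.2 ∧ 2 * (a.2 - a.1).val ≤ N)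
    (hT2 : ∀ i j : ZMod N, i ≠ j → 2 * (j - i).val < N → (i, j) ∈ T) :
    ∑ a ∈ T, (a.2 - a.1).val =
      N * (∑ m ∈ range ((N + 1) / 2), m)
        + (T.filter fun a => 2 * (a.2 - a.1).val = N).card * (N / 2) := by
  classical
  rw [← Finset.sum_filter_add_sum_filter_not T (fun a => 2 * (a.2 - a.1).val < N)]
  congr 1
  · have hS : T.filter (fun a => 2 * (a.2 - a.1).val < N)
        = univ.filter (fun a : ZMod N × ZMod N => a.1 ≠ a.2 ∧ 2 * (a.2 - a.1).val < N) := by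
      ext a
      simp only [Finset.mem_filter, Finset.mem_univ, true_and]
      constructor
      · intro ⟨haT, h⟩; exact ⟨(hT1 a haT).1, h⟩
      · intro ⟨h1, h2⟩
        exact ⟨by simpa using hT2 a.1 a.2 h1 h2, h2⟩
    rw [hS, Finset.sum_filter, Fintype.sum_prod_type]
    have inner : ∀ i : ZMod N,
        (∑ j : ZMod N, if i ≠ j ∧ 2 * (j - i).val < N then (j - i).val else 0)
          = ∑ m ∈ range ((N + 1) / 2), m := by
      intro i
      have e1 : (∑ j : ZMod N, if i ≠ j ∧ 2 * (j - i).val < N then (j - i).val else 0)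
          = ∑ d : ZMod N, (if 0 < d.val ∧ 2 * d.val < N then d.val else 0) := by
        refine Fintype.sum_equiv (Equiv.subRight i) _ _ ?_
        intro j
        simp only [Equiv.subRight_apply]
        congr 1
        have : (i ≠ j) ↔ (0 < (j - i).val) := by
          constructor
          · intro h
            rcases Nat.eq_zero_or_pos (j - i).val with h0 | h0
            · exact absurd (sub_eq_zero.mp ((ZMod.val_eq_zero _).mp h0)) (Ne.symm h)
            · exact h0
          · intro h0 he
            rw [he, sub_self, ZMod.val_zero] at h0
            exact Nat.lt_irrefl 0 h0
        simp [this]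
      rw [e1, sum_val_fun N (fun m => if 0 < m ∧ 2 * m < N then m else 0)]
      have e2 : (∑ m ∈ range N, if 0 < m ∧ 2 * m < N then m else 0)
          = ∑ m ∈ range N, if m < (N + 1) / 2 then m else 0 := by
        refine Finset.sum_congr rfl fun m hm => ?_
        simp only [Finset.mem_range] at hm
        split_ifs <;> omega
      rw [e2, ← Finset.sum_filter]
      congr 1
      ext m
      simp only [Finset.mem_filter, Finset.mem_range]
      omega
    rw [Finset.sum_congr rfl (fun i _ => inner i), Finset.sum_const, Finset.card_univ,
      ZMod.card, smul_eq_mul]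
  · have hD : T.filter (fun a => ¬(2 * (a.2 - a.1).val < N))
        = T.filter (fun a => 2 * (a.2 - a.1).val = N) := by
      apply Finset.filter_congr
      intro a ha
      have := (hT1 a ha).2
      constructor
      · intro h; simpa using Nat.le_antisymm this (not_lt.mp (by simpa using h))
      · intro h; simp [h]
    rw [hD]
    apply Finset.sum_const_nat
    intro a ha
    have h := (Finset.mem_filter.mp ha).2
    omega

lemma diam_card (hev : N % 2 = 0) (hN : 2 ≤ N)
    (T : Finset (ZMod N × ZMod N))
    (hT3 : ∀ i j : ZMod N, 2 * (j - i).val = N → ((i, j) ∈ T ↔ (j, i) ∉ T)) :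
    (T.filter fun a => 2 * (a.2 - a.1).val = N).card = N / 2 := by
  classical
  set D := T.filter fun a => 2 * (a.2 - a.1).val = N with hDdef
  set Dall := (univ : Finset (ZMod N × ZMod N)).filter
    (fun a => 2 * (a.2 - a.1).val = N) with hDalldef
  have hswaplen : ∀ a : ZMod N × ZMod N, 2 * (a.2 - a.1).val = N →
      2 * (a.1 - a.2).val = N := by
    intro a ha
    have hne : a.2 - a.1 ≠ 0 := by
      intro h0
      rw [h0, ZMod.val_zero] at ha
      omega
    have : a.1 - a.2 = -(a.2 - a.1) := by ring
    rw [this, ZMod.neg_val]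
    simp only [hne, if_false]
    omega
  have hcardall : Dall.card = N := by
    have : Dall.card = ∑ i : ZMod N, ∑ j : ZMod N,
        (if 2 * ((j : ZMod N) - i).val = N then 1 else 0) := by
      rw [hDalldef, Finset.card_filter, Fintype.sum_prod_type]
    rw [this]
    have hone : ∀ i : ZMod N, (∑ j : ZMod N, if 2 * ((j : ZMod N) - i).val = N then 1 else 0) = 1 := by
      intro i
      have e1 : (∑ j : ZMod N, if 2 * ((j : ZMod N) - i).val = N then 1 else 0)
          = ∑ d : ZMod N, (if 2 * d.val = N then 1 else 0) := by
        refine Fintype.sum_equiv (Equiv.subRight i) _ _ ?_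
        intro j; simp
      rw [e1, Finset.sum_boole]
      norm_cast
      have : (univ.filter fun d : ZMod N => 2 * d.val = N) = {((N / 2 : ℕ) : ZMod N)} := by
        ext d
        simp only [Finset.mem_filter, Finset.mem_univ, true_and, Finset.mem_singleton]
        constructor
        · intro h
          have : d.val = N / 2 := by omega
          rw [← this, zmod_cast_val]
        · intro h
          rw [h, ZMod.val_natCast_of_lt (by omega)]
          omega
      rw [this, Finset.card_singleton]
    rw [Finset.sum_congr rfl (fun i _ => hone i), Finset.sum_const, Finset.card_univ,
      ZMod.card, smul_eq_mul, mul_one]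
  have hunion : Dall = D ∪ D.image Prod.swap := by
    ext a
    simp only [hDalldef, hDdef, Finset.mem_filter, Finset.mem_univ, true_and,
      Finset.mem_union, Finset.mem_image]
    constructor
    · intro h
      rcases (em ((a.1, a.2) ∈ T)) with hT | hT
      · left; exact ⟨by simpa using hT, h⟩
      · right
        have hmem : (a.2, a.1) ∈ T := (hT3 a.2 a.1 (hswaplen a h)).mpr (by simpa using hT)
        exact ⟨(a.2, a.1), ⟨hmem, hswaplen a h⟩, by simp⟩
    · rintro (⟨h1, h2⟩ | ⟨b, ⟨hb1, hb2⟩, hb3⟩)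
      · exact h2
      · rw [← hb3]; exact hswaplen b hb2
  have hdisj : Disjoint D (D.image Prod.swap) := by
    rw [Finset.disjoint_left]
    intro a ha hb
    simp only [hDdef, Finset.mem_filter, Finset.mem_image] at ha hb
    obtain ⟨b, ⟨hb1, hb2⟩, hb3⟩ := hb
    have hlen : 2 * (a.2 - a.1).val = N := ha.2
    have : (a.1, a.2) ∈ T := by simpa using ha.1
    have h2 : (a.2, a.1) ∈ T := by rw [← hb3] at *; simpa using hb1
    exact ((hT3 a.1 a.2 hlen).mp this) h2
  have hcard2 : Dall.card = 2 * D.card := by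
    rw [hunion, Finset.card_union_of_disjoint hdisj,
      Finset.card_image_of_injective _ Prod.swap_injective]
    omega
  omega

end

theorem stmt_9 (N C W : ℕ) (hN : 2 ≤ N) (hC : 0 < C)
    -- `T` is the tournament of requests: all shortest clockwise arcs, with exactly one
    -- arc chosen per diametrical pair when `N` is even.
    (T : Finset (ZMod N × ZMod N))
    (hT1 : ∀ a ∈ T, a.1 ≠ a.2 ∧ 2 * (a.2 - a.1).val ≤ N)
    (hT2 : ∀ i j : ZMod N, i ≠ j → 2 * (j - i).val < N → (i, j) ∈ T)
    (hT3 : ∀ i j : ZMod N, 2 * (j - i).val = N → ((i, j) ∈ T ↔ (j, i) ∉ T))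
    -- a valid partition of the requests into `W` parts, each of load at most `C`
    (B : Fin W → Finset (ZMod N × ZMod N))
    (hdisj : ∀ w w', w ≠ w' → Disjoint (B w) (B w'))
    (hcover : ∀ a : ZMod N × ZMod N, a ∈ T ↔ ∃ w, a ∈ B w)
    (hload : ∀ w, ∀ t : ZMod N, cload N (B w) t ≤ C) :
    ⌈(((N : ℚ) ^ 2 +
        (if N % 2 = 1 then (-1 : ℚ) else if N % 4 = 2 then 4 else 8)) / (8 * C))⌉
      ≤ (W : ℤ) := by
  classical
  haveI : NeZero N := ⟨by omega⟩
  have htourn := tourn N T hT1 hT2 hT3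
  -- partition bound
  have hTB : T = Finset.univ.biUnion B := by
    ext a
    simp only [Finset.mem_biUnion, Finset.mem_univ, true_and]
    exact hcover a
  have hWCb : ∀ t : ZMod N, cload N T t ≤ W * C := by
    intro t
    have hcl : cload N T t = ∑ w : Fin W, cload N (B w) t := by
      unfold cload
      rw [hTB, Finset.filter_biUnion, Finset.card_biUnion]
      intro w _ w' _ hww'
      exact Finset.disjoint_filter_filter (hdisj w w' hww')
    rw [hcl]
    calc ∑ w : Fin W, cload N (B w) t ≤ ∑ _w : Fin W, C :=
          Finset.sum_le_sum (fun w _ => hload w t)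
      _ = W * C := by simp [Finset.sum_const, Finset.card_univ]
  -- total load
  set K : ℕ := ∑ m ∈ Finset.range ((N + 1) / 2), m with hKdef
  set Dc : ℕ := (T.filter fun a => 2 * (a.2 - a.1).val = N).card with hDcdef
  have htot : ∑ t : ZMod N, cload N T t = N * K + Dc * (N / 2) := by
    rw [sum_cload N T, sum_lengths_main N T hT1 hT2]
  have hK2 : 2 * K = ((N + 1) / 2) * ((N + 1) / 2 - 1) := by
    rw [hKdef, mul_comm]
    exact Finset.sum_range_id_mul_two _
  have hne : (Finset.univ : Finset (ZMod N)).Nonempty := ⟨0, Finset.mem_univ 0⟩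
  -- the key step: find L with 8L = N² + α and some arc of load ≥ L
  have final : ∀ L : ℕ, (∃ t : ZMod N, L ≤ cload N T t) →
      ((8 : ℚ) * L = (N : ℚ) ^ 2 +
        (if N % 2 = 1 then (-1 : ℚ) else if N % 4 = 2 then 4 else 8)) →
      ⌈(((N : ℚ) ^ 2 +
        (if N % 2 = 1 then (-1 : ℚ) else if N % 4 = 2 then 4 else 8)) / (8 * C))⌉
      ≤ (W : ℤ) := by
    intro L ⟨t, ht⟩ h8
    have hLWC : L ≤ W * C := le_trans ht (hWCb t)
    rw [Int.ceil_le, ← h8]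
    push_cast
    rw [div_le_iff₀ (by positivity : (0 : ℚ) < 8 * C)]
    have : (L : ℚ) ≤ (W : ℚ) * C := by exact_mod_cast hLWC
    linarith
  rcases Nat.even_or_odd N with hev | hod
  · -- N even
    have hev2 : N % 2 = 0 := Nat.even_iff.mp hev
    obtain ⟨m, hm⟩ : ∃ m, N = 2 * m := ⟨N / 2, by omega⟩
    have hm1 : 1 ≤ m := by omega
    have hDc : Dc = m := by
      rw [hDcdef, diam_card N hev2 hN T hT3]; omega
    have hk : (N + 1) / 2 = m := by omega
    have hK2' : 2 * K = m * (m - 1) := by rw [hK2, hk]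
    have hKz : (2 * K : ℤ) = m * (m - 1) := by
      have := hK2'
      zify [hm1] at this
      exact this
    set Sn : ℕ := ∑ t : ZMod N, cload N T t with hSndef
    have h1n : Sn = 2 * m * K + m * m := by
      rw [htot, hDc, hm, Nat.mul_div_cancel_left m (by norm_num : 0 < 2)]
    have hSz : (Sn : ℤ) = m * m * m := by
      have h1z : (Sn : ℤ) = 2 * m * K + m * m := by exact_mod_cast h1n
      rw [h1z]
      linear_combination (m : ℤ) * hKz
    have hNz : (N : ℤ) = 2 * m := by exact_mod_cast hm
    rcases Nat.even_or_odd m with hmev | hmod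
    · -- N ≡ 0 (mod 4)
      obtain ⟨c, hc⟩ : ∃ c, m = 2 * c := ⟨m / 2, by rcases hmev with ⟨d, hd⟩; omega⟩
      have hN4 : N % 4 = 0 := by omega
      have hmz : (m : ℤ) = 2 * c := by exact_mod_cast hc
      apply final (2 * c * c + 1)
      · -- existence
        by_contra hcon
        push_neg at hcon
        have hall : ∀ t : ZMod N, cload N T t ≤ 2 * c * c := by
          intro t; have := hcon t; omega
        have hconst : ∀ t : ZMod N, cload N T t = 2 * c * c := by
          by_contra hcc
          push_neg at hcc
          obtain ⟨t0, ht0⟩ := hcc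
          have hlt : cload N T t0 < 2 * c * c := lt_of_le_of_ne (hall t0) ht0
          have hs : Sn < ∑ _t : ZMod N, 2 * c * c :=
            Finset.sum_lt_sum (fun t _ => hall t) ⟨t0, Finset.mem_univ t0, hlt⟩
          have hs2 : (∑ _t : ZMod N, 2 * c * c : ℕ) = N * (2 * c * c) := by
            simp [Finset.sum_const, Finset.card_univ, ZMod.card]
          rw [hs2] at hs
          have hsz : (Sn : ℤ) < (N : ℤ) * (2 * c * c) := by exact_mod_cast hs
          rw [hSz, hNz, hmz] at hsz
          linarith
        -- contradiction with parity step
        have hstep := cload_step N hN T hT1 0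
        have hdeg := degree_sum N T hT1 htourn (0 + 1)
        have e1 : cload N T (0 + 1) = 2 * c * c := hconst _
        have e2 : cload N T 0 = 2 * c * c := hconst _
        omega
      · -- arithmetic: 8L = N² + 8
        rw [if_neg (by omega), if_neg (by omega), hm, hc]
        push_cast
        ring
    · -- N ≡ 2 (mod 4)
      obtain ⟨c, hc⟩ := hmod
      have hN4 : N % 4 = 2 := by omega
      have hmz : (m : ℤ) = 2 * c + 1 := by exact_mod_cast hc
      have hcz : (0 : ℤ) ≤ (c : ℤ) := Int.natCast_nonneg c
      apply final (2 * c * c + 2 * c + 1)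
      · by_contra hcon
        push_neg at hcon
        have hall : ∀ t : ZMod N, cload N T t ≤ 2 * c * c + 2 * c := by
          intro t; have := hcon t; omega
        have hs : Sn ≤ ∑ _t : ZMod N, (2 * c * c + 2 * c) :=
          Finset.sum_le_sum (fun t _ => hall t)
        have hs2 : (∑ _t : ZMod N, (2 * c * c + 2 * c) : ℕ) = N * (2 * c * c + 2 * c) := by
          simp [Finset.sum_const, Finset.card_univ, ZMod.card]
        rw [hs2] at hs
        have hsz : (Sn : ℤ) ≤ (N : ℤ) * (2 * c * c + 2 * c) := by exact_mod_cast hs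
        rw [hSz, hNz, hmz] at hsz
        nlinarith [hcz]
      · rw [if_neg (by omega), if_pos (by omega), hm, hc]
        push_cast
        ring
  · -- N odd
    have hod2 : N % 2 = 1 := Nat.odd_iff.mp hod
    have hDc : Dc = 0 := by
      rw [hDcdef, Finset.card_eq_zero, Finset.filter_eq_empty_iff]
      intro a _
      intro h
      omega
    have htot' : ∑ t : ZMod N, cload N T t = N * K := by rw [htot, hDc]; ring
    apply final K
    · by_contra hcon
      push_neg at hcon
      have hs : ∑ t : ZMod N, cload N T t < ∑ _t : ZMod N, K :=
        Finset.sum_lt_sum_of_nonempty hne (fun t _ => hcon t)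
      have hs2 : (∑ _t : ZMod N, K : ℕ) = N * K := by
        simp [Finset.sum_const, Finset.card_univ, ZMod.card]
      rw [hs2, htot'] at hs
      exact lt_irrefl _ hs
    · rw [if_pos hod2]
      set k : ℕ := (N + 1) / 2 with hkdef
      have hk1 : 1 ≤ k := by omega
      have h2k : (2 * k : ℤ) = N + 1 := by
        have : 2 * k = N + 1 := by omega
        exact_mod_cast this
      have hKz : (2 * K : ℤ) = k * (k - 1) := by
        have := hK2
        zify [hk1] at this
        exact this
      have h8 : (8 * K : ℤ) = N ^ 2 - 1 := by
        linear_combination 4 * hKz + (2 * (k : ℤ) - 1 + N) * h2k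
      have : (8 * K : ℚ) = (N : ℚ) ^ 2 - 1 := by exact_mod_cast h8
      push_cast
      linarith
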